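/- Let X be a metric space and let A : [n] → K(X) and B : [m] → K(X) be injective monotone chains of nonempty compact subsets of X. Then the convex hulls |A| and |B| of {e(A_1),…,e(A_n)} and {e(B_1),…,e(B_m)} in C_b(X) satisfy |A| ∩ |B| = |C|, where C is the injective monotone chain enumerating A([n]) ∩ B([m]). -/

import Mathlib

open Metric TopologicalSpace
open scoped Classical

section Aux

variable {X : Type*} [MetricSpace X]

private lemma eSum_apply (s : Finset (NonemptyCompacts X)) (w : NonemptyCompacts X → ℝ)
    (e : NonemptyCompacts X → BoundedContinuousFunction X ℝ) (x : X) :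
    (∑ C ∈ s, w C • e C) x = ∑ C ∈ s, w C * e C x := by
  induction s using Finset.cons_induction with
  | empty => simp
  | cons C s hC ih => simp [Finset.sum_cons, ih]

private lemma chain_min {s : Finset (NonemptyCompacts X)}
    (hc : IsChain (· ≤ ·) (↑s : Set (NonemptyCompacts X))) (hs : s.Nonempty) :
    ∃ M ∈ s, ∀ D ∈ s, M ≤ D := by
  obtain ⟨M, hM, hmin⟩ := Finset.exists_minimal hs
  refine ⟨M, hM, fun D hD => ?_⟩
  rcases eq_or_ne M D with rfl | hne
  · exact le_rfl
  · rcases hc (Finset.mem_coe.mpr hM) (Finset.mem_coe.mpr hD) hne with h | h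
    · exact h
    · exact hmin hD h

private lemma mem_iff_infDist (C : NonemptyCompacts X) (x : X) :
    x ∈ (C : Set X) ↔ infDist x (C : Set X) = 0 :=
  C.isCompact.isClosed.mem_iff_infDist_zero C.nonempty

private lemma sum_zero_iff {u : Finset (NonemptyCompacts X)} {v : NonemptyCompacts X → ℝ}
    (hv : ∀ C ∈ u, 0 < v C) (x : X) :
    ∑ C ∈ u, v C * infDist x (C : Set X) = 0 ↔ ∀ C ∈ u, x ∈ (C : Set X) := by
  rw [Finset.sum_eq_zero_iff_of_nonneg
    (fun C hC => mul_nonneg (hv C hC).le infDist_nonneg)]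
  refine forall_congr' fun C => imp_congr_right fun hC => ?_
  rw [mul_eq_zero, mem_iff_infDist]
  constructor
  · rintro (h | h)
    · exact absurd h (hv C hC).ne'
    · exact h
  · exact fun h => Or.inr h

private lemma empty_of_sum_zero {u : Finset (NonemptyCompacts X)} {v : NonemptyCompacts X → ℝ}
    (hv : ∀ C ∈ u, 0 < v C) (h : ∑ C ∈ u, v C = 0) : u = ∅ := by
  rcases u.eq_empty_or_nonempty with rfl | hu
  · rfl
  · exact absurd h (Finset.sum_pos hv hu).ne'

/-- The weight on the common minimum of two chains with equal sums and equal
induced functions cannot be strictly smaller on one side. -/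
private lemma not_weight_lt {s t : Finset (NonemptyCompacts X)}
    (hcs : IsChain (· ≤ ·) (↑s : Set (NonemptyCompacts X)))
    {w v : NonemptyCompacts X → ℝ}
    (hw : ∀ C ∈ s, 0 < w C) (hv : ∀ C ∈ t, 0 < v C)
    (hsum : ∑ C ∈ s, w C = ∑ C ∈ t, v C)
    (hfun : ∀ x, ∑ C ∈ s, w C * infDist x (C : Set X)
      = ∑ C ∈ t, v C * infDist x (C : Set X))
    {C₁ : NonemptyCompacts X} (hC₁s : C₁ ∈ s) (hC₁t : C₁ ∈ t)
    (hmins : ∀ D ∈ s, C₁ ≤ D) (hmint : ∀ D ∈ t, C₁ ≤ D) :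
    ¬ w C₁ < v C₁ := by
  intro hlt
  rcases (s.erase C₁).eq_empty_or_nonempty with he' | hne
  · -- then s = {C₁} and w C₁ = total ≥ v C₁
    have hs1 : ∑ C ∈ s, w C = w C₁ := by
      rw [← Finset.sum_erase_add s w hC₁s, he', Finset.sum_empty, zero_add]
    have : v C₁ ≤ w C₁ := by
      rw [← hs1, hsum]
      exact Finset.single_le_sum (fun C hC => (hv C hC).le) hC₁t
    linarith
  · obtain ⟨C₂, hC₂, hmin₂⟩ := chain_min (hcs.mono (by
      exact_mod_cast Finset.erase_subset C₁ s)) hne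
    have hC₂s := Finset.mem_of_mem_erase hC₂
    have hlt₂ : C₁ < C₂ :=
      lt_of_le_of_ne (hmins C₂ hC₂s) (Ne.symm (Finset.ne_of_mem_erase hC₂))
    have hss : (C₁ : Set X) ⊂ (C₂ : Set X) := by
      exact_mod_cast hlt₂
    obtain ⟨x, hxC₂, hxC₁⟩ := Set.exists_of_ssubset hss
    -- the LHS at x is 0
    have hL : ∑ C ∈ s.erase C₁, w C * infDist x (C : Set X) = 0 := by
      refine Finset.sum_eq_zero fun C hC => ?_
      have hx : x ∈ (C : Set X) := hmin₂ C hC hxC₂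
      rw [(mem_iff_infDist C x).mp hx, mul_zero]
    -- rewrite via the t side
    have hErs : ∑ C ∈ s.erase C₁, w C * infDist x (C : Set X)
        = (v C₁ - w C₁) * infDist x (C₁ : Set X)
          + ∑ C ∈ t.erase C₁, v C * infDist x (C : Set X) := by
      have h1 := Finset.sum_erase_add s
        (fun C => w C * infDist x (C : Set X)) hC₁s
      have h2 := Finset.sum_erase_add t
        (fun C => v C * infDist x (C : Set X)) hC₁t
      have h3 := hfun x
      linarith
    have hpos : 0 < infDist x (C₁ : Set X) :=
      lt_of_le_of_ne infDist_nonneg (fun h => hxC₁ ((mem_iff_infDist C₁ x).mpr h.symm))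
    have hnn : 0 ≤ ∑ C ∈ t.erase C₁, v C * infDist x (C : Set X) :=
      Finset.sum_nonneg fun C hC =>
        mul_nonneg (hv C (Finset.mem_of_mem_erase hC)).le infDist_nonneg
    nlinarith

private lemma key : ∀ (N : ℕ) (s t : Finset (NonemptyCompacts X)), s.card ≤ N →
    IsChain (· ≤ ·) (↑s : Set (NonemptyCompacts X)) →
    IsChain (· ≤ ·) (↑t : Set (NonemptyCompacts X)) →
    ∀ w v : NonemptyCompacts X → ℝ,
    (∀ C ∈ s, 0 < w C) → (∀ C ∈ t, 0 < v C) →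
    ∑ C ∈ s, w C = ∑ C ∈ t, v C →
    (∀ x, ∑ C ∈ s, w C * infDist x (C : Set X)
      = ∑ C ∈ t, v C * infDist x (C : Set X)) →
    s = t := by
  intro N
  induction N with
  | zero =>
    intro s t hcard _ _ w v hw hv hsum _
    have hs : s = ∅ := Finset.card_eq_zero.mp (Nat.le_zero.mp hcard)
    subst hs
    rw [Finset.sum_empty] at hsum
    exact (empty_of_sum_zero hv hsum.symm).symm
  | succ N ih =>
    intro s t hcard hcs hct w v hw hv hsum hfun
    rcases s.eq_empty_or_nonempty with rfl | hsne
    · rw [Finset.sum_empty] at hsum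
      exact (empty_of_sum_zero hv hsum.symm).symm
    · obtain ⟨C₁, hC₁s, hmins⟩ := chain_min hcs hsne
      have htne : t.Nonempty := by
        rcases t.eq_empty_or_nonempty with rfl | h
        · rw [Finset.sum_empty] at hsum
          exact absurd hsum (Finset.sum_pos hw hsne).ne'
        · exact h
      obtain ⟨D₁, hD₁t, hmint⟩ := chain_min hct htne
      -- C₁ = D₁ via zero sets
      have hCD : C₁ = D₁ := by
        have hsets : (C₁ : Set X) = (D₁ : Set X) := by
          ext x
          constructor
          · intro hx
            have h0 : ∑ C ∈ s, w C * infDist x (C : Set X) = 0 :=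
              (sum_zero_iff hw x).mpr fun C hC => hmins C hC hx
            exact ((sum_zero_iff hv x).mp (hfun x ▸ h0)) D₁ hD₁t
          · intro hx
            have h0 : ∑ C ∈ t, v C * infDist x (C : Set X) = 0 :=
              (sum_zero_iff hv x).mpr fun C hC => hmint C hC hx
            exact ((sum_zero_iff hw x).mp ((hfun x).symm ▸ h0)) C₁ hC₁s
        exact SetLike.coe_injective hsets
      subst hCD
      have hweq : w C₁ = v C₁ := by
        have h1 := not_weight_lt hcs hw hv hsum hfun hC₁s hD₁t hmins hmint
        have h2 := not_weight_lt hct hv hw hsum.symm (fun x => (hfun x).symm)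
          hD₁t hC₁s hmint hmins
        linarith [not_lt.mp h1, not_lt.mp h2]
      -- apply induction hypothesis to the erased sets
      have herase : s.erase C₁ = t.erase C₁ := by
        refine ih (s.erase C₁) (t.erase C₁) ?_ ?_ ?_ w v
          (fun C hC => hw C (Finset.mem_of_mem_erase hC))
          (fun C hC => hv C (Finset.mem_of_mem_erase hC)) ?_ ?_
        · have := Finset.card_erase_of_mem hC₁s
          omega
        · exact hcs.mono (by exact_mod_cast Finset.erase_subset C₁ s)
        · exact hct.mono (by exact_mod_cast Finset.erase_subset C₁ t)
        · have h1 := Finset.sum_erase_add s w hC₁s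
          have h2 := Finset.sum_erase_add t v hD₁t
          linarith
        · intro x
          have h1 := Finset.sum_erase_add s
            (fun C => w C * infDist x (C : Set X)) hC₁s
          have h2 := Finset.sum_erase_add t
            (fun C => v C * infDist x (C : Set X)) hD₁t
          have h3 := hfun x
          rw [hweq] at h1
          linarith
      calc s = insert C₁ (s.erase C₁) := (Finset.insert_erase hC₁s).symm
        _ = insert C₁ (t.erase C₁) := by rw [herase]
        _ = t := Finset.insert_erase hD₁t

end Aux

/-- Let `A : [n] → K(X)` and `B : [m] → K(X)` be injective monotone chains of nonempty
compact subsets of a metric space `X`, and let `e(A)(x) = d(x,A)` in `C_b(X)`.  Then the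
convex hulls of `{e(A_1),…,e(A_n)}` and `{e(B_1),…,e(B_m)}` intersect exactly in the convex
hull of the `e`-image of the common subchain `A([n]) ∩ B([m])`. -/
theorem stmt6 {X : Type*} [MetricSpace X]
    (e : NonemptyCompacts X → BoundedContinuousFunction X ℝ)
    (he : ∀ (A : NonemptyCompacts X) (x : X), e A x = infDist x (A : Set X))
    {n m : ℕ} (A : Fin n → NonemptyCompacts X) (B : Fin m → NonemptyCompacts X)
    (hA : StrictMono A) (hB : StrictMono B) :
    convexHull ℝ (e '' Set.range A) ∩ convexHull ℝ (e '' Set.range B)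
      = convexHull ℝ (e '' (Set.range A ∩ Set.range B)) := by
  classical
  have einj : Function.Injective e := by
    intro C D h
    apply SetLike.coe_injective
    apply Set.Subset.antisymm
    · intro x hx
      have : infDist x (D : Set X) = 0 := by
        rw [← he, ← h, he]
        exact infDist_zero_of_mem hx
      exact (mem_iff_infDist D x).mpr this
    · intro x hx
      have : infDist x (C : Set X) = 0 := by
        rw [← he, h, he]
        exact infDist_zero_of_mem hx
      exact (mem_iff_infDist C x).mpr this
  apply Set.Subset.antisymm
  · rintro f ⟨hfA, hfB⟩
    set sA : Finset (NonemptyCompacts X) := Finset.univ.image A with hsA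
    set sB : Finset (NonemptyCompacts X) := Finset.univ.image B with hsB
    have hsAr : (↑sA : Set (NonemptyCompacts X)) = Set.range A := by
      simp [hsA]
    have hsBr : (↑sB : Set (NonemptyCompacts X)) = Set.range B := by
      simp [hsB]
    have hAr : e '' Set.range A = ↑(sA.image e) := by
      rw [Finset.coe_image, hsAr]
    have hBr : e '' Set.range B = ↑(sB.image e) := by
      rw [Finset.coe_image, hsBr]
    rw [hAr, Finset.convexHull_eq] at hfA
    rw [hBr, Finset.convexHull_eq] at hfB
    obtain ⟨w, hw0, hw1, hwc⟩ := hfA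
    obtain ⟨v, hv0, hv1, hvc⟩ := hfB
    rw [Finset.centerMass_eq_of_sum_1 _ _ hw1] at hwc
    rw [Finset.centerMass_eq_of_sum_1 _ _ hv1] at hvc
    simp only [id_eq] at hwc hvc
    have hinjA : ∀ x ∈ sA, ∀ y ∈ sA, e x = e y → x = y := fun a _ b _ h => einj h
    have hinjB : ∀ x ∈ sB, ∀ y ∈ sB, e x = e y → x = y := fun a _ b _ h => einj h
    -- reindex over NonemptyCompacts
    have hwsum : ∑ C ∈ sA, w (e C) = 1 := by
      rw [← hw1]; exact (Finset.sum_image (f := w) hinjA).symm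
    have hvsum : ∑ C ∈ sB, v (e C) = 1 := by
      rw [← hv1]; exact (Finset.sum_image (f := v) hinjB).symm
    have hwf : ∑ C ∈ sA, w (e C) • e C = f := by
      rw [← hwc]; exact (Finset.sum_image (f := fun g => w g • g) hinjA).symm
    have hvf : ∑ C ∈ sB, v (e C) • e C = f := by
      rw [← hvc]; exact (Finset.sum_image (f := fun g => v g • g) hinjB).symm
    -- restrict to positive weights
    set sP : Finset (NonemptyCompacts X) := sA.filter (fun C => 0 < w (e C)) with hsP
    set tP : Finset (NonemptyCompacts X) := sB.filter (fun C => 0 < v (e C)) with htP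
    have hwnn : ∀ C ∈ sA, 0 ≤ w (e C) := fun C hC =>
      hw0 (e C) (Finset.mem_image_of_mem e hC)
    have hvnn : ∀ C ∈ sB, 0 ≤ v (e C) := fun C hC =>
      hv0 (e C) (Finset.mem_image_of_mem e hC)
    have hPsub : sP ⊆ sA := Finset.filter_subset _ _
    have htsub : tP ⊆ sB := Finset.filter_subset _ _
    have hPzero : ∀ C ∈ sA, C ∉ sP → w (e C) = 0 := by
      intro C hC hnC
      have := Finset.mem_filter.not.mp hnC
      push_neg at this
      exact le_antisymm (this hC) (hwnn C hC)
    have htzero : ∀ C ∈ sB, C ∉ tP → v (e C) = 0 := by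
      intro C hC hnC
      have := Finset.mem_filter.not.mp hnC
      push_neg at this
      exact le_antisymm (this hC) (hvnn C hC)
    have hPsum : ∑ C ∈ sP, w (e C) = 1 := by
      rw [← hwsum]
      exact Finset.sum_subset hPsub hPzero
    have htsum : ∑ C ∈ tP, v (e C) = 1 := by
      rw [← hvsum]
      exact Finset.sum_subset htsub htzero
    have hPf : ∑ C ∈ sP, w (e C) • e C = f := by
      rw [← hwf]
      exact Finset.sum_subset hPsub (fun C hC hnC => by
        rw [hPzero C hC hnC, zero_smul])
    have htf : ∑ C ∈ tP, v (e C) • e C = f := by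
      rw [← hvf]
      exact Finset.sum_subset htsub (fun C hC hnC => by
        rw [htzero C hC hnC, zero_smul])
    -- chains
    have hchA : IsChain (· ≤ ·) (Set.range A) := by
      rintro _ ⟨i, rfl⟩ _ ⟨j, rfl⟩ _
      rcases le_total i j with h | h
      · exact Or.inl (hA.monotone h)
      · exact Or.inr (hA.monotone h)
    have hchB : IsChain (· ≤ ·) (Set.range B) := by
      rintro _ ⟨i, rfl⟩ _ ⟨j, rfl⟩ _
      rcases le_total i j with h | h
      · exact Or.inl (hB.monotone h)
      · exact Or.inr (hB.monotone h)
    have hchP : IsChain (· ≤ ·) (↑sP : Set (NonemptyCompacts X)) := by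
      refine hchA.mono ?_
      rw [← hsAr]
      exact_mod_cast hPsub
    have hchT : IsChain (· ≤ ·) (↑tP : Set (NonemptyCompacts X)) := by
      refine hchB.mono ?_
      rw [← hsBr]
      exact_mod_cast htsub
    have hPT : sP = tP := by
      refine key sP.card sP tP le_rfl hchP hchT (fun C => w (e C)) (fun C => v (e C))
        (fun C hC => (Finset.mem_filter.mp hC).2)
        (fun C hC => (Finset.mem_filter.mp hC).2)
        (by rw [hPsum, htsum]) ?_
      intro x
      have h1 := congrArg (fun g : BoundedContinuousFunction X ℝ => g x) (hPf.trans htf.symm)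
      rw [eSum_apply, eSum_apply] at h1
      simpa only [he] using h1
    -- conclude membership
    have hmem : ∀ C ∈ sP, e C ∈ e '' (Set.range A ∩ Set.range B) := by
      intro C hC
      refine ⟨C, ⟨?_, ?_⟩, rfl⟩
      · rw [← hsAr]; exact_mod_cast hPsub hC
      · rw [← hsBr]
        exact_mod_cast htsub (hPT ▸ hC)
    have := Finset.centerMass_mem_convexHull sP
      (w := fun C => w (e C))
      (fun C hC => (Finset.mem_filter.mp hC).2.le)
      (by rw [hPsum]; norm_num) (z := e) hmem
    rwa [Finset.centerMass_eq_of_sum_1 _ _ hPsum, hPf] at this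
  · exact Set.subset_inter
      (convexHull_mono (Set.image_mono Set.inter_subset_left))
      (convexHull_mono (Set.image_mono Set.inter_subset_right))
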